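/- If a graph G has highway dimension k according to the witness-based definition of Abraham et al. 2010 (for all r > 0 and all vertices v there is a set of at most k vertices hitting all r-significant shortest paths that are (r,2r)-close to v), then G has highway dimension at most k(k+1) according to Definition 1 with c = 4 and violation λ = 0: for every r > 0 and every ball B_{4r}(v), there is a set of at most k(k+1) vertices hitting all shortest paths that lie inside B_{4r}(v) and have length more than r. -/

import Mathlib

open SimpleGraph

universe u

variable {V : Type u}

/-- The length of a walk in a graph `G` with edge lengths `len`. -/
noncomputable def wlen {G : SimpleGraph V} (len : V → V → ℝ) {u v : V} (w : G.Walk u v) : ℝ :=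
  (w.darts.map (fun e => len e.toProd.1 e.toProd.2)).sum

/-- A walk is a *shortest path* (w.r.t. the shortest-path metric `d`) if it is a
path whose total length equals the distance between its endpoints. -/
def IsShortestPath {G : SimpleGraph V} (len d : V → V → ℝ) {u v : V}
    (w : G.Walk u v) : Prop :=
  w.IsPath ∧ wlen len w = d u v

/-- `d` is the shortest-path metric of the graph `G` with edge lengths `len`:
it is a lower bound on the length of every walk, and for every pair of vertices it
is attained by some path (a shortest path). -/
def IsShortestPathMetric (G : SimpleGraph V) (len d : V → V → ℝ) : Prop :=
  (∀ (u v : V) (w : G.Walk u v), d u v ≤ wlen len w) ∧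
  (∀ u v : V, ∃ w : G.Walk u v, IsShortestPath len d w)

/-- The closed ball `B_r(v)` of radius `r` around `v` (w.r.t. `d`). -/
def cball (d : V → V → ℝ) (v : V) (r : ℝ) : Set V := {u | d u v ≤ r}

/-- A *shortest path cover* for scale `r` (with parameter `c`): a set of hubs
hitting every shortest path of length in `(r, c*r/2]`. -/
def IsSPC (G : SimpleGraph V) (len d : V → V → ℝ) (c r : ℝ) (H : Set V) : Prop :=
  ∀ (u v : V) (w : G.Walk u v), IsShortestPath len d w →
    r < wlen len w → wlen len w ≤ c * r / 2 → ∃ h ∈ H, h ∈ w.support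

/-- A minimal shortest path cover: no proper subset is a shortest path cover. -/
def IsMinimalSPC (G : SimpleGraph V) (len d : V → V → ℝ) (c r : ℝ) (H : Set V) : Prop :=
  IsSPC G len d c r H ∧ ∀ H' : Set V, H' ⊂ H → ¬ IsSPC G len d c r H'

/-- `H` is locally `s`-sparse for scale `r`: every ball of radius `c*r/2` contains
at most `s` vertices of `H`. -/
def LocallySparse (d : V → V → ℝ) (c r : ℝ) (s : ℕ) (H : Set V) : Prop :=
  ∀ v : V, (H ∩ cball d v (c * r / 2)).ncard ≤ s

/-- Definition 1: the highway dimension of `G` is at most `k` if for every scale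
`r > 0` and every ball of radius `c*r`, there are at most `k` vertices in the ball
hitting all shortest paths of length more than `r` that lie inside the ball. -/
def HighwayDimLE (G : SimpleGraph V) (len d : V → V → ℝ) (c : ℝ) (k : ℕ) : Prop :=
  ∀ r : ℝ, 0 < r → ∀ v : V, ∃ H : Set V, H ⊆ cball d v (c * r) ∧ H.ncard ≤ k ∧
    ∀ (a b : V) (w : G.Walk a b), IsShortestPath len d w →
      (∀ x ∈ w.support, x ∈ cball d v (c * r)) → r < wlen len w →
      ∃ h ∈ H, h ∈ w.support

/-- `P'` is an *`r`-witness* of the shortest path `P`: a shortest path of length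
more than `r` obtained from `P` by adding at most one vertex to each end. -/
def IsWitness {G : SimpleGraph V} (len d : V → V → ℝ) (r : ℝ)
    {a b : V} (P : G.Walk a b) {a' b' : V} (P' : G.Walk a' b') : Prop :=
  IsShortestPath len d P' ∧ r < wlen len P' ∧
    (P'.support = P.support ∨ P'.support = a' :: P.support ∨
     P'.support = P.support ++ [b'] ∨ P'.support = a' :: (P.support ++ [b']))

/-- The witness-based definition of highway dimension (Abraham et al. 2010):
for all `r > 0` and all vertices `v` there is a set of at most `k` vertices hitting
all `r`-significant shortest paths that are `(r, 2r)`-close to `v`. -/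
def WitnessHighwayDimLE (G : SimpleGraph V) (len d : V → V → ℝ) (k : ℕ) : Prop :=
  ∀ r : ℝ, 0 < r → ∀ v : V, ∃ H : Set V, H.ncard ≤ k ∧
    ∀ (a b : V) (P : G.Walk a b), IsShortestPath len d P →
      (∃ (a' b' : V) (P' : G.Walk a' b'),
        IsWitness len d r P P' ∧ ∃ x ∈ P'.support, d x v ≤ 2 * r) →
      ∃ h ∈ H, h ∈ P.support

section Aux

variable {G : SimpleGraph V} (len d : V → V → ℝ)

@[simp] lemma wlen_nil {u : V} : wlen len (Walk.nil : G.Walk u u) = 0 := by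
  simp [wlen]

@[simp] lemma wlen_cons {u v w : V} (h : G.Adj u v) (p : G.Walk v w) :
    wlen len (Walk.cons h p) = len u v + wlen len p := by
  simp [wlen]

@[simp] lemma wlen_append {u v w : V} (p : G.Walk u v) (q : G.Walk v w) :
    wlen len (p.append q) = wlen len p + wlen len q := by
  simp [wlen, Walk.darts_append]

@[simp] lemma wlen_concat {u v w : V} (p : G.Walk u v) (h : G.Adj v w) :
    wlen len (p.concat h) = wlen len p + len v w := by
  simp [Walk.concat_eq_append]

lemma wlen_nonneg (hlen_pos : ∀ u v : V, G.Adj u v → 0 < len u v)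
    {u v : V} (p : G.Walk u v) : 0 ≤ wlen len p := by
  induction p with
  | nil => simp
  | cons h p ih => simpa using add_nonneg (hlen_pos _ _ h).le ih

lemma d_nonneg (hlen_pos : ∀ u v : V, G.Adj u v → 0 < len u v)
    (hmetric : IsShortestPathMetric G len d) (u v : V) : 0 ≤ d u v := by
  obtain ⟨w, _, hw⟩ := hmetric.2 u v
  exact hw ▸ wlen_nonneg len hlen_pos w

lemma d_self (hlen_pos : ∀ u v : V, G.Adj u v → 0 < len u v)
    (hmetric : IsShortestPathMetric G len d) (u : V) : d u u = 0 :=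
  le_antisymm (by simpa using hmetric.1 u u Walk.nil)
    (d_nonneg len d hlen_pos hmetric u u)

/-- Splitting a shortest path at an intermediate decomposition gives shortest subpaths. -/
lemma shortest_split (hmetric : IsShortestPathMetric G len d)
    {x y v : V} (p : G.Walk x y) (q : G.Walk y v)
    (hsp : IsShortestPath len d (p.append q)) :
    IsShortestPath len d p ∧ IsShortestPath len d q := by
  obtain ⟨hpath, hlen⟩ := hsp
  have h1 : d x y ≤ wlen len p := hmetric.1 x y p
  have h2 : d y v ≤ wlen len q := hmetric.1 y v q
  have htri : d x v ≤ d x y + d y v := by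
    obtain ⟨w1, _, hw1⟩ := hmetric.2 x y
    obtain ⟨w2, _, hw2⟩ := hmetric.2 y v
    have := hmetric.1 x v (w1.append w2)
    rw [wlen_append, hw1, hw2] at this
    exact this
  rw [wlen_append] at hlen
  constructor
  · exact ⟨hpath.of_append_left, by linarith⟩
  · exact ⟨hpath.of_append_right, by linarith⟩

/-- A vertex on a walk starting at `x` is within distance `wlen` of `x`. -/
lemma d_le_wlen_of_mem [DecidableEq V] (hlen_pos : ∀ u v : V, G.Adj u v → 0 < len u v)
    (hmetric : IsShortestPathMetric G len d)
    {x y : V} (p : G.Walk x y) {h : V} (hm : h ∈ p.support) :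
    d x h ≤ wlen len p := by
  have hspec := p.take_spec hm
  have : wlen len ((p.takeUntil h hm).append (p.dropUntil h hm)) = wlen len p := by
    rw [hspec]
  rw [wlen_append] at this
  have h1 := hmetric.1 x h (p.takeUntil h hm)
  have h2 := wlen_nonneg len hlen_pos (p.dropUntil h hm)
  linarith

/-- Find the prefix of a walk where the cumulative length first exceeds `s`. -/
lemma exists_prefix_exceed {x v : V} (Q : G.Walk x v) : ∀ s : ℝ, 0 ≤ s →
    s < wlen len Q →
    ∃ (y y' : V) (Q₁ : G.Walk x y) (e : G.Adj y y') (Q₂ : G.Walk y' v),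
      wlen len Q₁ ≤ s ∧ s < wlen len (Q₁.concat e) ∧
      (Q₁.concat e).append Q₂ = Q := by
  induction Q with
  | nil =>
    intro s hs hgt
    simp only [wlen_nil] at hgt
    linarith
  | @cons a b c e Q ih =>
    intro s hs hgt
    rw [wlen_cons] at hgt
    by_cases hcase : s < len a b
    · refine ⟨a, b, Walk.nil, e, Q, by simpa using hs, ?_, ?_⟩
      · rw [Walk.concat_nil, wlen_cons, wlen_nil]; linarith
      · rw [Walk.concat_nil]; rfl
    · push_neg at hcase
      have h' : s - len a b < wlen len Q := by linarith
      obtain ⟨y, y', Q₁, e', Q₂, h1, h2, h3⟩ := ih (s - len a b) (by linarith) h'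
      refine ⟨y, y', Walk.cons e Q₁, e', Q₂, ?_, ?_, ?_⟩
      · rw [wlen_cons]; linarith
      · rw [Walk.concat_cons, wlen_cons]
        rw [wlen_concat] at h2 ⊢
        linarith
      · rw [Walk.concat_cons, Walk.cons_append, h3]

lemma ncard_biUnion_le' [Finite V] {T : Set V} (hT : T.Finite) (F : V → Set V) (m : ℕ)
    (hF : ∀ x, (F x).ncard ≤ m) :
    (⋃ x ∈ T, F x).ncard ≤ T.ncard * m := by
  refine Set.Finite.induction_on T hT (by simp) (fun {a s} ha hs ih => ?_)
  rw [Set.biUnion_insert]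
  calc (F a ∪ ⋃ x ∈ s, F x).ncard ≤ (F a).ncard + (⋃ x ∈ s, F x).ncard :=
        Set.ncard_union_le _ _
    _ ≤ m + s.ncard * m := add_le_add (hF a) ih
    _ = (insert a s).ncard * m := by
        rw [Set.ncard_insert_of_notMem ha hs, add_mul, one_mul, add_comm]

end Aux


/-- Lemma 44 of the paper: a graph of highway dimension `k`
according to the witness-based definition of Abraham et al. 2010 has highway
dimension at most `k * (k + 1)` according to Definition 1 with `c = 4` (violation
`λ = 0`): for every `r > 0` and every ball `B_{4r}(v)` there is a set of at most
`k * (k + 1)` vertices hitting all shortest paths that lie inside `B_{4r}(v)` and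
have length more than `r`. -/
theorem statement17 {V : Type} [Fintype V] (G : SimpleGraph V) (len d : V → V → ℝ)
    (hlen_symm : ∀ u v : V, len u v = len v u)
    (hlen_pos : ∀ u v : V, G.Adj u v → 0 < len u v)
    (hmetric : IsShortestPathMetric G len d)
    (k : ℕ) (hWHD : WitnessHighwayDimLE G len d k) :
    ∀ r : ℝ, 0 < r → ∀ v : V,
      ∃ H : Set V, H ⊆ cball d v (4 * r) ∧ H.ncard ≤ k * (k + 1) ∧
        ∀ (a b : V) (P : G.Walk a b), IsShortestPath len d P →
          (∀ x ∈ P.support, x ∈ cball d v (4 * r)) → r < wlen len P →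
          ∃ h ∈ H, h ∈ P.support := by
  classical
  intro r hr v
  choose F hFcard hFhit using fun c => hWHD r hr c
  obtain ⟨T, hTcard, hThit⟩ := hWHD (2 * r) (by linarith) v
  refine ⟨(F v ∪ ⋃ h ∈ T, F h) ∩ cball d v (4 * r), Set.inter_subset_right, ?_, ?_⟩
  · calc ((F v ∪ ⋃ h ∈ T, F h) ∩ cball d v (4 * r)).ncard
        ≤ (F v ∪ ⋃ h ∈ T, F h).ncard :=
          Set.ncard_le_ncard Set.inter_subset_left (Set.toFinite _)
      _ ≤ (F v).ncard + (⋃ h ∈ T, F h).ncard := Set.ncard_union_le _ _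
      _ ≤ k + T.ncard * k :=
          add_le_add (hFcard v) (ncard_biUnion_le' (Set.toFinite T) F k hFcard)
      _ ≤ k + k * k := add_le_add_right (Nat.mul_le_mul_right k hTcard) k
      _ = k * (k + 1) := by ring
  · intro a b P hP hball hlenP
    have hav : d a v ≤ 4 * r := hball a P.start_mem_support
    by_cases hcase : d a v ≤ 2 * r
    · obtain ⟨h, hh, hhm⟩ := hFhit v a b P hP
        ⟨a, b, P, ⟨hP, hlenP, Or.inl rfl⟩, a, P.start_mem_support, hcase⟩
      exact ⟨h, ⟨Set.mem_union_left _ hh, hball h hhm⟩, hhm⟩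
    · push_neg at hcase
      obtain ⟨Q, hQ⟩ := hmetric.2 a v
      have hwQ : 2 * r < wlen len Q := by rw [hQ.2]; exact hcase
      obtain ⟨y, y', Q₁, e, Q₂, h1, h2, h3⟩ :=
        exists_prefix_exceed len Q (2 * r) (by linarith) hwQ
      have hQsplit : IsShortestPath len d ((Q₁.concat e).append Q₂) := by
        rw [h3]; exact hQ
      have hQ' : IsShortestPath len d (Q₁.concat e) :=
        (shortest_split len d hmetric _ _ hQsplit).1
      have hQ₁ : IsShortestPath len d Q₁ := by
        rw [Walk.concat_eq_append] at hQ'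
        exact (shortest_split len d hmetric _ _ hQ').1
      obtain ⟨h, hhT, hhQ₁⟩ := hThit a y Q₁ hQ₁
        ⟨a, y', Q₁.concat e,
          ⟨hQ', h2,
            Or.inr (Or.inr (Or.inl (by
              rw [Walk.support_concat])))⟩,
          a, (Q₁.concat e).start_mem_support, by linarith⟩
      have hah : d a h ≤ 2 * r :=
        le_trans (d_le_wlen_of_mem len d hlen_pos hmetric Q₁ hhQ₁) h1
      obtain ⟨h', hh'F, hh'P⟩ := hFhit h a b P hP
        ⟨a, b, P, ⟨hP, hlenP, Or.inl rfl⟩, a, P.start_mem_support, hah⟩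
      exact ⟨h', ⟨Set.mem_union_right _ (Set.mem_biUnion hhT hh'F), hball h' hh'P⟩, hh'P⟩
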